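/- Let ξ_n be the random variable with P(ξ_n = k) = m_n(k)/C_n, where m_n(k) are the coefficients of the q-Catalan number C_n(q). Then the variance of ξ_n equals n(n-1)(n+1)/6. -/

import Mathlib

open Polynomial Finset

noncomputable def qInt (m : ℕ) : Polynomial ℝ :=
  ∑ i ∈ Finset.range m, Polynomial.X ^ i

noncomputable def qFact (m : ℕ) : Polynomial ℝ :=
  ∏ i ∈ Finset.range m, qInt (i + 1)

lemma eval_qInt (m : ℕ) : (qInt m).eval 1 = m := by
  simp [qInt]

lemma qInt_ne_zero {m : ℕ} (hm : 1 ≤ m) : qInt m ≠ 0 := by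
  intro h
  have h2 := eval_qInt m
  rw [h] at h2
  simp at h2
  have : m = 0 := by exact_mod_cast h2.symm
  omega

lemma eval_qFact_pos (m : ℕ) : 0 < (qFact m).eval 1 := by
  rw [qFact, eval_prod]
  apply Finset.prod_pos
  intro i _
  rw [eval_qInt]
  positivity

lemma m1_qInt (m : ℕ) : (derivative (qInt m)).eval 1 = ∑ i ∈ range m, (i : ℝ) := by
  simp [qInt, derivative_X_pow, eval_finset_sum]

lemma m2_qInt (m : ℕ) :
    (derivative (derivative (qInt m))).eval 1 = ∑ i ∈ range m, (i : ℝ) * ((i - 1 : ℕ) : ℝ) := by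
  simp [qInt, derivative_X_pow, eval_finset_sum]

lemma s1_closed (m : ℕ) : ∑ i ∈ range m, (i : ℝ) = m * (m - 1) / 2 := by
  induction m with
  | zero => simp
  | succ k ih =>
    rw [Finset.sum_range_succ, ih]
    push_cast
    ring

lemma s2_closed (m : ℕ) :
    ∑ i ∈ range m, (i : ℝ) * ((i - 1 : ℕ) : ℝ) = m * (m - 1) * (m - 2) / 3 := by
  induction m with
  | zero => simp
  | succ k ih =>
    rw [Finset.sum_range_succ, ih]
    rcases k with _ | k
    · norm_num
    · push_cast [Nat.succ_sub_one]
      ring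

noncomputable def vr (p : Polynomial ℝ) : ℝ :=
  (derivative (derivative p)).eval 1 / p.eval 1 + (derivative p).eval 1 / p.eval 1
    - ((derivative p).eval 1 / p.eval 1) ^ 2

lemma vr_mul (p q : Polynomial ℝ) (hp : p.eval 1 ≠ 0) (hq : q.eval 1 ≠ 0) :
    vr (p * q) = vr p + vr q := by
  unfold vr
  simp only [derivative_mul, derivative_add, eval_add, eval_mul]
  field_simp
  ring

lemma vr_qInt (m : ℕ) (hm : 1 ≤ m) : vr (qInt m) = ((m : ℝ) ^ 2 - 1) / 12 := by
  have hm' : (m : ℝ) ≠ 0 := by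
    have : (0:ℝ) < m := by exact_mod_cast hm
    linarith
  unfold vr
  rw [eval_qInt, m1_qInt, m2_qInt, s1_closed, s2_closed]
  field_simp
  ring

lemma vr_qFact (m : ℕ) : vr (qFact m) = (m : ℝ) * ((m : ℝ) - 1) * (2 * (m : ℝ) + 5) / 72 := by
  induction m with
  | zero =>
    have : qFact 0 = 1 := by simp [qFact]
    rw [this]
    unfold vr
    simp
  | succ k ih =>
    have hstep : qFact (k + 1) = qFact k * qInt (k + 1) := by
      rw [qFact, qFact, Finset.prod_range_succ]
    rw [hstep, vr_mul _ _ (ne_of_gt (eval_qFact_pos k)) (by rw [eval_qInt]; positivity),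
      ih, vr_qInt (k + 1) (by omega)]
    push_cast
    ring

lemma natDegree_qInt (m : ℕ) (hm : 1 ≤ m) : (qInt m).natDegree = m - 1 := by
  induction m with
  | zero => omega
  | succ k ih =>
    rcases Nat.lt_or_ge k 1 with h | hk
    · interval_cases k
      simp [qInt]
    · have h1 : qInt (k + 1) = qInt k + Polynomial.X ^ k := by
        rw [qInt, qInt, Finset.sum_range_succ]
      rw [h1, Polynomial.natDegree_add_eq_right_of_natDegree_lt]
      · simp
      · rw [ih hk, Polynomial.natDegree_X_pow]
        omega

lemma natDegree_qFact (m : ℕ) : (qFact m).natDegree = ∑ i ∈ range m, i := by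
  rw [qFact, Polynomial.natDegree_prod]
  · apply Finset.sum_congr rfl
    intro i _
    rw [natDegree_qInt (i + 1) (by omega)]
    omega
  · intro i _
    exact qInt_ne_zero (by omega)

lemma sum_mul_coeff (p : Polynomial ℝ) (M : ℕ) (hM : 1 ≤ M) (h : p.natDegree ≤ M) :
    ∑ k ∈ range (M + 1), (k : ℝ) * p.coeff k = (derivative p).eval 1 := by
  have hd : (derivative p).natDegree < M := by
    have := Polynomial.natDegree_derivative_le p
    omega
  rw [Polynomial.eval_eq_sum_range' hd, Finset.sum_range_succ']
  simp only [Polynomial.coeff_derivative, one_pow, mul_one, Nat.cast_zero, zero_mul, add_zero]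
  apply Finset.sum_congr rfl
  intro k _
  push_cast
  ring

lemma sum_sq_mul_coeff (p : Polynomial ℝ) (M : ℕ) (hM : 2 ≤ M) (h : p.natDegree ≤ M) :
    ∑ k ∈ range (M + 1), (k : ℝ) ^ 2 * p.coeff k
      = (derivative (derivative p)).eval 1 + (derivative p).eval 1 := by
  have hd : (derivative p).natDegree ≤ M - 1 := by
    have := Polynomial.natDegree_derivative_le p
    omega
  have h1 : ∑ k ∈ range ((M - 1) + 1), (k : ℝ) * (derivative p).coeff k
      = (derivative (derivative p)).eval 1 := sum_mul_coeff _ _ (by omega) hd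
  have h2 : (derivative p).eval 1 = ∑ k ∈ range ((M - 1) + 1), (derivative p).coeff k := by
    rw [Polynomial.eval_eq_sum_range' (n := (M-1)+1) (by omega)]
    simp
  rw [h2, ← h1, Finset.sum_range_succ']
  rw [← Finset.sum_add_distrib]
  have hM1 : (M - 1) + 1 = M := by omega
  rw [hM1]
  simp only [Polynomial.coeff_derivative, Nat.cast_zero, ne_eq, OfNat.ofNat_ne_zero,
    not_false_eq_true, zero_pow, zero_mul, add_zero]
  apply Finset.sum_congr rfl
  intro k _
  push_cast
  ring

/-- The variance of the random variable $ξ_n$ distributed according to the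
coefficients of the q-Catalan number equals $n(n-1)(n+1)/6$. -/
theorem qCatalan_variance (n : ℕ) (hn : 1 ≤ n) (P : Polynomial ℝ)
    (hP : qFact n ^ 2 * qInt (n + 1) * P = qFact (2 * n)) :
    (∑ k ∈ Finset.range (n * (n - 1) + 1), (k : ℝ) ^ 2 * P.coeff k) / P.eval 1
      - ((∑ k ∈ Finset.range (n * (n - 1) + 1), (k : ℝ) * P.coeff k) / P.eval 1) ^ 2
      = (n : ℝ) * ((n : ℝ) - 1) * ((n : ℝ) + 1) / 6 := by
  -- basic nonvanishing facts
  have hFn := eval_qFact_pos n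
  have hF2n := eval_qFact_pos (2 * n)
  have hI : (qInt (n + 1)).eval 1 ≠ 0 := by rw [eval_qInt]; positivity
  have hevalP : P.eval 1 ≠ 0 := by
    intro h0
    have := congrArg (Polynomial.eval 1) hP
    simp [h0] at this
    exact absurd this.symm (ne_of_gt hF2n)
  rcases Nat.eq_or_lt_of_le hn with h1 | h2
  · -- n = 1
    subst h1
    norm_num
  · -- n ≥ 2
    have hn2 : 2 ≤ n := h2
    obtain ⟨u, rfl⟩ : ∃ u, n = u + 1 := ⟨n - 1, by omega⟩
    have hu : 1 ≤ u := by omega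
    have hPne : P ≠ 0 := fun h => hevalP (by simp [h])
    have hAne : qFact (u + 1) ^ 2 * qInt (u + 1 + 1) ≠ 0 := by
      intro h
      have := congrArg (Polynomial.eval 1) h
      rw [eval_mul, eval_pow] at this
      simp at this
      rcases this with h | h
      · exact absurd h (ne_of_gt hFn)
      · exact hI h
    have hdeg : P.natDegree = (u + 1) * (u + 1 - 1) := by
      have hdegs := congrArg Polynomial.natDegree hP
      rw [Polynomial.natDegree_mul hAne hPne, Polynomial.natDegree_mul (by
          intro h
          have := congrArg (Polynomial.eval 1) h
          rw [eval_pow] at this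
          simp at this
          exact absurd this (ne_of_gt hFn)) (qInt_ne_zero (by omega)),
        Polynomial.natDegree_pow, natDegree_qFact, natDegree_qFact,
        natDegree_qInt (u + 1 + 1) (by omega)] at hdegs
      have g1 := Finset.sum_range_id_mul_two (u + 1)
      have g2 := Finset.sum_range_id_mul_two (2 * (u + 1))
      set s := ∑ i ∈ range (u + 1), i with hs
      set t := ∑ i ∈ range (2 * (u + 1)), i with ht
      set b := P.natDegree with hb
      have e1 : (s : ℤ) * 2 = ((u : ℤ) + 1) * u := by
        have : (u + 1) - 1 = u := by omega
        rw [this] at g1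
        exact_mod_cast g1
      have e2 : (t : ℤ) * 2 = (2 * (u : ℤ) + 2) * (2 * (u : ℤ) + 1) := by
        have h' : 2 * (u + 1) - 1 = 2 * u + 1 := by omega
        rw [h'] at g2
        zify at g2
        linear_combination g2
      have e3 : 2 * (s : ℤ) + ((u : ℤ) + 1) + b = t := by
        have h' : u + 1 + 1 - 1 = u + 1 := by omega
        rw [h'] at hdegs
        exact_mod_cast hdegs
      have h2b : 2 * (b : ℤ) = 2 * (((u : ℤ) + 1) * u) := by
        linear_combination e2 - 2 * e1 + 2 * e3
      have hbz : (b : ℤ) = ((u : ℤ) + 1) * u := by linarith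
      have : (u + 1) * (u + 1 - 1) = (u + 1) * u := by rw [Nat.add_sub_cancel]
      rw [this]
      exact_mod_cast hbz
    have hM : 2 ≤ (u + 1) * (u + 1 - 1) := by
      have h' : (u + 1) * (u + 1 - 1) = (u + 1) * u := by rw [Nat.add_sub_cancel]
      rw [h']
      calc 2 = 2 * 1 := rfl
        _ ≤ (u + 1) * u := Nat.mul_le_mul (by omega) (by omega)
    rw [sum_mul_coeff P ((u + 1) * (u + 1 - 1)) (by omega) (le_of_eq hdeg),
      sum_sq_mul_coeff P ((u + 1) * (u + 1 - 1)) hM (le_of_eq hdeg)]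
    have hvr := congrArg vr hP
    have hFsq : (qFact (u + 1) : Polynomial ℝ) ^ 2 = qFact (u + 1) * qFact (u + 1) :=
      sq (qFact (u + 1))
    rw [hFsq, vr_mul _ _ (by
        rw [eval_mul, eval_mul]
        exact mul_ne_zero (mul_ne_zero (ne_of_gt hFn) (ne_of_gt hFn)) hI) hevalP,
      vr_mul _ _ (by rw [eval_mul]; exact mul_ne_zero (ne_of_gt hFn) (ne_of_gt hFn)) hI,
      vr_mul _ _ (ne_of_gt hFn) (ne_of_gt hFn), vr_qFact, vr_qFact,
      vr_qInt (u + 1 + 1) (by omega)] at hvr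
    push_cast at hvr
    have hvrP : vr P = ((u : ℝ) + 1) * (((u : ℝ) + 1) - 1) * (((u : ℝ) + 1) + 1) / 6 := by
      linear_combination hvr
    unfold vr at hvrP
    push_cast
    rw [add_div]
    exact hvrP
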